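/- arXiv:1404.5497 — 2 statements merged into one kernel-verified Lean document; each statement's English description precedes it below -/
import Mathlib

section
/- For any prime number b and any positive integer k, the group of units of the quotient ring F_b[x]/(x^k) can be written as a direct product of at most k cyclic groups. -/
open Polynomial

noncomputable section

private def zmodCongrMul {a b : ℕ} (h : a = b) :
    Multiplicative (ZMod a) ≃* Multiplicative (ZMod b) := by subst h; exact MulEquiv.refl _

private def mulEquivPiSubtypeProd {ι : Type*} (P : ι → Prop) [DecidablePred P]
    (M : ι → Type*) [∀ i, Monoid (M i)] :
    (∀ i, M i) ≃* (∀ i : {x // P x}, M i.1) × (∀ i : {x // ¬ P x}, M i.1) :=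
  { Equiv.piEquivPiSubtypeProd P M with map_mul' := fun _ _ => rfl }

private def mulEquivPiCongrLeft' {α β : Type*} (M : α → Type*) [∀ a, Monoid (M a)] (e : α ≃ β) :
    (∀ a, M a) ≃* ∀ b, M (e.symm b) :=
  { Equiv.piCongrLeft' M e with map_mul' := fun _ _ => rfl }

private def mulEquivPiFinSucc {m : ℕ} (M : Fin (m + 1) → Type*) [∀ i, Monoid (M i)] :
    (∀ i, M i) ≃* M 0 × ∀ j : Fin m, M j.succ where
  toFun f := (f 0, fun j => f j.succ)
  invFun x := Fin.cons x.1 x.2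
  left_inv f := Fin.cons_self_tail f
  right_inv x := by ext <;> simp
  map_mul' _ _ := rfl

private def evZero (b k : ℕ) (hk : 0 < k) :
    (Polynomial (ZMod b) ⧸ Ideal.span {(X : Polynomial (ZMod b)) ^ k}) →+* ZMod b :=
  Ideal.Quotient.lift _ (Polynomial.evalRingHom 0) (by
    intro a ha
    rw [Ideal.mem_span_singleton] at ha
    obtain ⟨c, rfl⟩ := ha
    simp [zero_pow hk.ne'])

private lemma ker_pow (b k : ℕ) (hb : b.Prime) (hk : 0 < k)
    (u : (Polynomial (ZMod b) ⧸ Ideal.span {(X : Polynomial (ZMod b)) ^ k})ˣ)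
    (hu : evZero b k hk (u : Polynomial (ZMod b) ⧸ Ideal.span {(X : Polynomial (ZMod b)) ^ k}) = 1) :
    u ^ b ^ k = 1 := by
  haveI := Fact.mk hb
  set Q := Polynomial (ZMod b) ⧸ Ideal.span {(X : Polynomial (ZMod b)) ^ k} with hQ
  haveI : Nontrivial Q := (evZero b k hk).domain_nontrivial
  haveI : CharP Q b := charP_of_injective_ringHom
    (algebraMap (ZMod b) Q).injective b
  set a : Q := (u : Q) - 1 with ha
  have hak : a ^ k = 0 := by
    obtain ⟨p, hp⟩ := Ideal.Quotient.mk_surjective (I := Ideal.span {(X : Polynomial (ZMod b)) ^ k}) a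
    have hev : Polynomial.eval 0 p = 0 := by
      have : evZero b k hk a = 0 := by
        rw [ha, map_sub, hu, map_one, sub_self]
      rw [← hp] at this
      simpa [evZero, Ideal.Quotient.lift_mk] using this
    have hX : (X : Polynomial (ZMod b)) ∣ p := by
      rw [Polynomial.X_dvd_iff, Polynomial.coeff_zero_eq_eval_zero, hev]
    have : (X : Polynomial (ZMod b)) ^ k ∣ p ^ k := pow_dvd_pow_of_dvd hX k
    rw [← hp, ← map_pow, Ideal.Quotient.eq_zero_iff_mem]
    exact Ideal.mem_span_singleton.mpr this
  have habk : a ^ b ^ k = 0 := by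
    have hklek : k ≤ b ^ k := (Nat.lt_pow_self (n := k) hb.one_lt).le
    calc a ^ b ^ k = a ^ k * a ^ (b ^ k - k) := by
            rw [← pow_add, Nat.add_sub_cancel' hklek]
      _ = 0 := by rw [hak, zero_mul]
  have : (u : Q) ^ b ^ k = 1 := by
    have : ((1 : Q) + a) ^ b ^ k = 1 ^ b ^ k + a ^ b ^ k := add_pow_char_pow (p := b) (n := k) 1 a
    rw [habk, one_pow, add_zero] at this
    simpa [ha] using this
  ext
  simpa using this

private def fintypeQ (b k : ℕ) (hb : b.Prime) (hk : 0 < k) :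
    Fintype (Polynomial (ZMod b) ⧸ Ideal.span {(X : Polynomial (ZMod b)) ^ k}) := by
  haveI := Fact.mk hb
  have := Module.fintypeOfFintype (AdjoinRoot.powerBasis (K := ZMod b)
    (f := (X : Polynomial (ZMod b)) ^ k) (pow_ne_zero _ X_ne_zero)).basis
  exact this

private lemma cardQ (b k : ℕ) (hb : b.Prime) (hk : 0 < k) :
    Nat.card (Polynomial (ZMod b) ⧸ Ideal.span {(X : Polynomial (ZMod b)) ^ k}) = b ^ k := by
  haveI := Fact.mk hb
  let pb := AdjoinRoot.powerBasis (K := ZMod b) (f := (X : Polynomial (ZMod b)) ^ k)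
    (pow_ne_zero _ X_ne_zero)
  haveI : Fintype (AdjoinRoot ((X : Polynomial (ZMod b)) ^ k)) := Module.fintypeOfFintype pb.basis
  have h1 : Fintype.card (AdjoinRoot ((X : Polynomial (ZMod b)) ^ k)) =
      Fintype.card (ZMod b) ^ Fintype.card (Fin pb.dim) := Module.card_fintype pb.basis
  have hd : pb.dim = k := by simp [pb, AdjoinRoot.powerBasis]
  rw [Fintype.card_fin, hd, ZMod.card] at h1
  rw [← h1]
  exact Nat.card_eq_fintype_card (α := AdjoinRoot ((X : Polynomial (ZMod b)) ^ k))

private lemma cardUnitsLt (b k : ℕ) (hb : b.Prime) (hk : 0 < k) :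
    Nat.card (Polynomial (ZMod b) ⧸ Ideal.span {(X : Polynomial (ZMod b)) ^ k})ˣ < b ^ k := by
  haveI := Fact.mk hb
  haveI := fintypeQ b k hb hk
  set Q := Polynomial (ZMod b) ⧸ Ideal.span {(X : Polynomial (ZMod b)) ^ k} with hQ
  haveI : Nontrivial Q := by
    refine Ideal.Quotient.nontrivial_iff.mpr ?_
    rw [Ne, Ideal.span_singleton_eq_top, isUnit_pow_iff hk.ne']
    exact Polynomial.not_isUnit_X
  haveI : Fintype Qˣ := Fintype.ofFinite _
  have h2 : Nat.card Qˣ < Nat.card Q := by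
    rw [Nat.card_eq_fintype_card, Nat.card_eq_fintype_card]
    refine Fintype.card_lt_of_injective_of_notMem (Units.val : Qˣ → Q) Units.val_injective (b := 0) ?_
    rintro ⟨u, hu⟩
    exact u.ne_zero hu
  calc Nat.card Qˣ < Nat.card Q := h2
    _ = b ^ k := cardQ b k hb hk

/-- For any prime `b` and positive integer `k`, the group of units of
`F_b[x]/(x^k)` is isomorphic to a direct product of at most `k` cyclic groups
(each a cyclic group `Multiplicative (ZMod (d i))`). -/
theorem stmt0 (b k : ℕ) (hb : b.Prime) (hk : 0 < k) :
    ∃ (n : ℕ) (d : Fin n → ℕ), n ≤ k ∧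
      Nonempty ((Polynomial (ZMod b) ⧸ Ideal.span {(Polynomial.X : Polynomial (ZMod b)) ^ k})ˣ
        ≃* ((i : Fin n) → Multiplicative (ZMod (d i)))) := by
  classical
  haveI := Fact.mk hb
  haveI : NeZero b := ⟨hb.pos.ne'⟩
  haveI : Finite (Polynomial (ZMod b) ⧸ Ideal.span {(X : Polynomial (ZMod b)) ^ k}) :=
    @Finite.of_fintype _ (fintypeQ b k hb hk)
  set Q := Polynomial (ZMod b) ⧸ Ideal.span {(X : Polynomial (ZMod b)) ^ k} with hQdef
  obtain ⟨ι, hι, p, hp, e, ⟨E0⟩⟩ := AddCommGroup.equiv_directSum_zmod_of_finite (Additive Qˣ)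
  haveI : ∀ i : ι, NeZero (p i ^ e i) := fun i => ⟨pow_ne_zero _ (hp i).pos.ne'⟩
  let E1 : Qˣ ≃* ∀ i : ι, Multiplicative (ZMod (p i ^ e i)) :=
    MulEquiv.toAdditive.symm <| E0.trans <| (DirectSum.addEquivProd _).trans <|
      MulEquiv.toAdditiveRight <| MulEquiv.piMultiplicative _
  set P : ι → Prop := fun i => p i = b ∧ e i ≠ 0 with hP
  let E2 := mulEquivPiSubtypeProd P (fun i => Multiplicative (ZMod (p i ^ e i)))
  let C : Type _ := ∀ i : {x // ¬ P x}, Multiplicative (ZMod (p i.1 ^ e i.1))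
  let j : C →* Qˣ := E1.symm.toMonoidHom.comp (E2.symm.toMonoidHom.comp
    (MonoidHom.inr (∀ i : {x // P x}, Multiplicative (ZMod (p i.1 ^ e i.1))) C))
  have hjinj : Function.Injective j := by
    refine E1.symm.injective.comp (E2.symm.injective.comp ?_)
    intro x y h
    exact congrArg Prod.snd h
  have hcardC : Nat.card C = ∏ i : {x // ¬ P x}, p i.1 ^ e i.1 := by
    rw [Nat.card_pi]
    exact Finset.prod_congr rfl fun i _ => by
      rw [Nat.card_congr Multiplicative.toAdd, Nat.card_zmod]
  have hCcop : (Nat.card C).Coprime b := by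
    rw [hcardC]
    refine Nat.Coprime.prod_left fun i _ => ?_
    by_cases he : e i.1 = 0
    · simp [he]
    · have hpb : p i.1 ≠ b := fun h => i.2 ⟨h, he⟩
      exact Nat.Coprime.pow_left _ ((Nat.coprime_primes (hp i.1) hb).mpr hpb)
  have hψinj : Function.Injective
      ((Units.map (evZero b k hk).toMonoidHom).comp j) := by
    rw [injective_iff_map_eq_one]
    intro c hc
    have h1 : (j c) ^ b ^ k = 1 := by
      apply ker_pow b k hb hk
      have := congrArg Units.val hc
      simpa using this
    have h2 : c ^ b ^ k = 1 := by
      apply hjinj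
      rw [map_pow, h1, map_one]
    have h3 : orderOf c ∣ b ^ k := orderOf_dvd_of_pow_eq_one h2
    have h4 : orderOf c ∣ Nat.card C := orderOf_dvd_natCard c
    have h5 : orderOf c ∣ 1 := (hCcop.pow_right k) ▸ Nat.dvd_gcd h4 h3
    rw [← orderOf_eq_one_iff]
    exact Nat.dvd_one.mp h5
  haveI hC : IsCyclic C := by
    have F := MonoidHom.ofInjective hψinj
    exact isCyclic_of_surjective F.symm.toMonoidHom F.symm.surjective
  let eC : Multiplicative (ZMod (Nat.card C)) ≃* C := zmodCyclicMulEquiv hC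
  let St := {x // P x}
  let m := Fintype.card St
  let eS : St ≃ Fin m := Fintype.equivFin St
  let pe : Fin m → ℕ := fun j0 => p (eS.symm j0).1 ^ e (eS.symm j0).1
  let d : Fin (m + 1) → ℕ := Fin.cons (Nat.card C) pe
  refine ⟨m + 1, d, ?_, ?_⟩
  · -- m + 1 ≤ k
    have hdvd : b ^ m ∣ Nat.card Qˣ := by
      have hcard : Nat.card Qˣ = ∏ i : ι, p i ^ e i := by
        rw [Nat.card_congr E1.toEquiv, Nat.card_pi]
        exact Finset.prod_congr rfl fun i _ => by
          rw [Nat.card_congr Multiplicative.toAdd, Nat.card_zmod]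
      rw [hcard]
      have hm : m = (Finset.univ.filter P).card := Fintype.card_subtype P
      calc b ^ m = ∏ _i ∈ Finset.univ.filter P, b := by rw [Finset.prod_const, hm]
        _ ∣ ∏ i ∈ Finset.univ.filter P, p i ^ e i := by
            refine Finset.prod_dvd_prod_of_dvd _ _ fun i hi => ?_
            obtain ⟨h1, h2⟩ := (Finset.mem_filter.mp hi).2
            exact h1 ▸ dvd_pow_self (p i) h2
        _ ∣ ∏ i : ι, p i ^ e i :=
            Finset.prod_dvd_prod_of_subset _ _ _ (Finset.filter_subset _ _)
    have hlt : b ^ m < b ^ k :=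
      lt_of_le_of_lt (Nat.le_of_dvd Nat.card_pos hdvd) (cardUnitsLt b k hb hk)
    exact (Nat.pow_lt_pow_iff_right hb.one_lt).mp hlt
  · refine ⟨?_⟩
    have h0 : d 0 = Nat.card C := Fin.cons_zero _ _
    have hsucc : ∀ j0 : Fin m, d j0.succ = pe j0 := fun j0 => Fin.cons_succ _ _ _
    exact (((E1.trans E2).trans
        (MulEquiv.prodCongr (mulEquivPiCongrLeft'
          (fun i : St => Multiplicative (ZMod (p i.1 ^ e i.1))) eS) eC.symm)).trans
        (MulEquiv.prodComm)).trans
      ((mulEquivPiFinSucc (fun i => Multiplicative (ZMod (d i)))).trans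
        (MulEquiv.prodCongr (zmodCongrMul h0)
          (MulEquiv.piCongrRight fun j0 => zmodCongrMul (hsucc j0)))).symm
end
end

section
/- Let N ∈ ℕ, z = (z_1,...,z_s) ∈ ℤ^s, and α > 1. Then ∑_{h ∈ D} ∏_{j=1}^s ρ'_{α,γ_j}(h_j) = -1 + (1/N) ∑_{n=0}^{N-1} ∏_{j=1}^s [1 + γ_j ∑_{h ∈ ℤ\{0}} exp(2πi h z_j n / N)/|h|^α], where D = {h ∈ ℤ^s \ {0} : h·z ≡ 0 (mod N)}. -/
/-- Character sum: `∑_{n<N} e^{2πikn/N} = N` if `N ∣ k`, else `0`. -/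
private lemma charSum (N : ℕ) (hN : 1 ≤ N) (k : ℤ) :
    ∑ n ∈ Finset.range N, Complex.exp (2 * Real.pi * Complex.I * (k : ℂ) * (n : ℂ) / (N : ℂ))
      = if (N : ℤ) ∣ k then (N : ℂ) else 0 := by
  have hN0 : (N : ℂ) ≠ 0 := Nat.cast_ne_zero.mpr (by omega)
  set ζ : ℂ := Complex.exp (2 * Real.pi * Complex.I * (k : ℂ) / (N : ℂ)) with hζ
  have hterm : ∀ n : ℕ,
      Complex.exp (2 * Real.pi * Complex.I * (k : ℂ) * (n : ℂ) / (N : ℂ)) = ζ ^ n := by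
    intro n
    rw [hζ, ← Complex.exp_nat_mul]
    congr 1
    ring
  simp_rw [hterm]
  by_cases hdvd : (N : ℤ) ∣ k
  · rw [if_pos hdvd]
    obtain ⟨m, hm⟩ := hdvd
    have hz1 : ζ = 1 := by
      rw [hζ, hm]
      have : (2 * (Real.pi : ℂ) * Complex.I * (((N : ℤ) * m : ℤ) : ℂ) / (N : ℂ))
          = (m : ℂ) * (2 * Real.pi * Complex.I) := by
        push_cast
        field_simp
      rw [this, Complex.exp_int_mul_two_pi_mul_I]
    simp [hz1]
  · have hζN : ζ ^ N = 1 := by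
      rw [hζ, ← Complex.exp_nat_mul]
      have : (N : ℂ) * (2 * Real.pi * Complex.I * (k : ℂ) / (N : ℂ))
          = (k : ℂ) * (2 * Real.pi * Complex.I) := by
        field_simp
      rw [this, Complex.exp_int_mul_two_pi_mul_I]
    have hζ1 : ζ ≠ 1 := by
      intro h
      rw [hζ, Complex.exp_eq_one_iff] at h
      obtain ⟨m, hm⟩ := h
      apply hdvd
      refine ⟨m, ?_⟩
      have h2 : (2 * (Real.pi : ℂ) * Complex.I) * (k : ℂ)
          = (2 * (Real.pi : ℂ) * Complex.I) * ((N : ℂ) * m) := by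
        have := (div_eq_iff hN0).mp hm
        linear_combination this
      have hk : (k : ℂ) = (N : ℂ) * m := mul_left_cancel₀ Complex.two_pi_I_ne_zero h2
      exact_mod_cast hk
    rw [geom_sum_eq hζ1, hζN, if_neg hdvd]
    simp


private lemma summable_rho {α : ℝ} (hα : 1 < α) (γ : ℝ) :
    Summable (fun h : ℤ => if h = 0 then (1 : ℝ) else γ * |(h : ℝ)| ^ (-α)) := by
  have h1 : Summable (fun h : ℤ => γ * |(h : ℝ)| ^ (-α)) :=
    (Real.summable_abs_int_rpow hα).mul_left γ
  have := h1.update 0 1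
  refine this.congr fun h => ?_
  rw [Function.update_apply]

private lemma summable_pi_prod : ∀ (s : ℕ) (F : Fin s → ℤ → ℝ),
    (∀ j, Summable (F j)) → (∀ j h, 0 ≤ F j h) →
    Summable (fun h : Fin s → ℤ => ∏ j, F j (h j)) := by
  intro s
  induction s with
  | zero =>
    intro F _ _
    exact .of_finite
  | succ n ih =>
    intro F hS h0
    have key := Summable.mul_of_nonneg (hS 0)
      (ih (fun j => F j.succ) (fun j => hS _) (fun j h => h0 _ _)) (h0 0)
      (fun x => Finset.prod_nonneg fun j _ => h0 _ _)
    rw [← (Fin.consEquiv (fun _ : Fin (n + 1) => ℤ)).summable_iff]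
    refine key.congr fun x => ?_
    simp [Fin.consEquiv, Fin.prod_univ_succ]

private lemma tsum_pi_prod : ∀ (s : ℕ) (F : Fin s → ℤ → ℂ),
    (∀ j, Summable fun h => ‖F j h‖) →
    ∑' h : Fin s → ℤ, ∏ j, F j (h j) = ∏ j, ∑' h : ℤ, F j h := by
  intro s
  induction s with
  | zero =>
    intro F _
    rw [tsum_eq_single (fun _ => 0) (fun b hb => absurd (Subsingleton.elim b _) hb)]
    simp
  | succ n ih =>
    intro F hS
    have hnorm : Summable fun h : Fin n → ℤ => ‖∏ j, F j.succ (h j)‖ := by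
      have := summable_pi_prod n (fun j h => ‖F j.succ h‖) (fun j => hS _)
        (fun j h => norm_nonneg _)
      refine this.congr fun h => ?_
      rw [norm_prod]
    calc ∑' h : Fin (n + 1) → ℤ, ∏ j, F j (h j)
        = ∑' x : ℤ × (Fin n → ℤ), F 0 x.1 * ∏ j, F j.succ (x.2 j) := by
          rw [← (Fin.consEquiv (fun _ : Fin (n + 1) => ℤ)).tsum_eq]
          refine tsum_congr fun x => ?_
          simp [Fin.consEquiv, Fin.prod_univ_succ]
      _ = (∑' h : ℤ, F 0 h) * ∑' h : Fin n → ℤ, ∏ j, F j.succ (h j) :=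
          (tsum_mul_tsum_of_summable_norm (hS 0) hnorm).symm
      _ = ∏ j, ∑' h : ℤ, F j h := by
          rw [ih (fun j => F j.succ) (fun j => hS _), Fin.prod_univ_succ]


private lemma arg_eq (a : ℤ) (b : ℤ) (c : ℕ) (d : ℕ) :
    2 * (Real.pi : ℂ) * Complex.I * (a : ℂ) * (b : ℂ) * (c : ℂ) / (d : ℂ)
      = ((2 * Real.pi * a * b * c / d : ℝ) : ℂ) * Complex.I := by
  push_cast
  ring

private lemma norm_exp_eq_one (a : ℤ) (b : ℤ) (c : ℕ) (d : ℕ) :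
    ‖Complex.exp (2 * (Real.pi : ℂ) * Complex.I * (a : ℂ) * (b : ℂ) * (c : ℂ) / (d : ℂ))‖ = 1 := by
  rw [arg_eq, Complex.norm_exp_ofReal_mul_I]

private lemma norm_summand {α : ℝ} (γ : ℝ) (hγ : 0 ≤ γ) (w : ℤ) (n N : ℕ) (h : ℤ) :
    ‖(if h = 0 then (1 : ℂ) else (γ : ℂ) * ((|(h : ℝ)| ^ (-α) : ℝ) : ℂ)) *
        Complex.exp (2 * Real.pi * Complex.I * (h : ℂ) * (w : ℂ) * (n : ℂ) / (N : ℂ))‖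
      = (if h = 0 then (1 : ℝ) else γ * |(h : ℝ)| ^ (-α)) := by
  rw [norm_mul, norm_exp_eq_one, mul_one]
  split_ifs with hh
  · simp
  · rw [norm_mul, Complex.norm_real, Complex.norm_real, Real.norm_eq_abs, Real.norm_eq_abs,
      _root_.abs_of_nonneg hγ, abs_eq_self.mpr (Real.rpow_nonneg (abs_nonneg _) _)]

private lemma summable_summand {α : ℝ} (hα : 1 < α) (γ : ℝ) (hγ : 0 ≤ γ) (w : ℤ) (n N : ℕ) :
    Summable fun h : ℤ =>
      (if h = 0 then (1 : ℂ) else (γ : ℂ) * ((|(h : ℝ)| ^ (-α) : ℝ) : ℂ)) *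
        Complex.exp (2 * Real.pi * Complex.I * (h : ℂ) * (w : ℂ) * (n : ℂ) / (N : ℂ)) := by
  apply Summable.of_norm
  have h1 : Summable (fun h : ℤ => γ * |(h : ℝ)| ^ (-α)) :=
    (Real.summable_abs_int_rpow hα).mul_left γ
  refine (h1.update 0 1).congr fun h => ?_
  rw [Function.update_apply, norm_summand γ hγ w n N h]

private lemma one_dim {α : ℝ} (hα : 1 < α) (γ : ℝ) (hγ : 0 ≤ γ) (w : ℤ) (n N : ℕ) :
    ∑' h : ℤ, ((if h = 0 then (1 : ℂ) else (γ : ℂ) * ((|(h : ℝ)| ^ (-α) : ℝ) : ℂ)) *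
        Complex.exp (2 * Real.pi * Complex.I * (h : ℂ) * (w : ℂ) * (n : ℂ) / (N : ℂ)))
      = 1 + (γ : ℂ) * ∑' h : {h : ℤ // h ≠ 0},
          Complex.exp (2 * Real.pi * Complex.I * ((h : ℤ) : ℂ) * (w : ℂ) * (n : ℂ) / (N : ℂ))
            / ((|((h : ℤ) : ℝ)| : ℝ) ^ α : ℝ) := by
  rw [Summable.tsum_eq_add_tsum_ite (summable_summand hα γ hγ w n N) 0]
  congr 1
  · norm_num
  · have hsupp : Function.support (fun m : ℤ => if m = 0 then (0 : ℂ) else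
        (if m = 0 then (1 : ℂ) else (γ : ℂ) * ((|(m : ℝ)| ^ (-α) : ℝ) : ℂ)) *
          Complex.exp (2 * Real.pi * Complex.I * (m : ℂ) * (w : ℂ) * (n : ℂ) / (N : ℂ)))
        ⊆ Set.range ((↑) : {h : ℤ // h ≠ 0} → ℤ) := by
      intro m hm
      by_cases hm0 : m = 0
      · simp [hm0, Function.mem_support] at hm
      · exact ⟨⟨m, hm0⟩, rfl⟩
    rw [← Subtype.val_injective.tsum_eq hsupp, ← tsum_mul_left]
    refine tsum_congr fun h => ?_
    obtain ⟨m, hm⟩ := h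
    simp only [if_neg hm]
    rw [Real.rpow_neg (abs_nonneg _)]
    push_cast
    rw [mul_comm]
    rw [div_eq_mul_inv]
    ring

private lemma norm_exp_eq_one' (a : ℤ) (c d : ℕ) :
    ‖Complex.exp (2 * (Real.pi : ℂ) * Complex.I * (a : ℂ) * (c : ℂ) / (d : ℂ))‖ = 1 := by
  have : 2 * (Real.pi : ℂ) * Complex.I * (a : ℂ) * (c : ℂ) / (d : ℂ)
      = ((2 * Real.pi * a * c / d : ℝ) : ℂ) * Complex.I := by push_cast; ring
  rw [this, Complex.norm_exp_ofReal_mul_I]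

set_option maxHeartbeats 1000000 in
/-- Worst-case error identity for product weights: with
`ρ'_{α,γ}(0) = 1`, `ρ'_{α,γ}(h) = γ|h|^(-α)` for `h ≠ 0`, and
`D = {h ∈ ℤ^s \ {0} : h·z ≡ 0 (mod N)}`, one has
`∑_{h ∈ D} ∏_j ρ'_{α,γ_j}(h_j)
  = -1 + (1/N) ∑_{n=0}^{N-1} ∏_j [1 + γ_j ∑_{h≠0} exp(2πi h z_j n/N)/|h|^α]`. -/
theorem stmt7 (N s : ℕ) (hN : 1 ≤ N) (hs : 1 ≤ s) (z : Fin s → ℤ)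
    (α : ℝ) (hα : 1 < α) (γ : Fin s → ℝ) (hγ : ∀ j, 0 < γ j) :
    ((∑' h : {h : Fin s → ℤ // h ≠ 0 ∧ (N : ℤ) ∣ ∑ j, h j * z j},
        ∏ j, (if h.1 j = 0 then 1 else γ j * |((h.1 j : ℤ) : ℝ)| ^ (-α)) : ℝ) : ℂ)
      = -1 + (1 / (N : ℂ)) * ∑ n ∈ Finset.range N, ∏ j,
          (1 + (γ j : ℂ) * ∑' h : {h : ℤ // h ≠ 0},
            Complex.exp (2 * Real.pi * Complex.I * ((h : ℤ) : ℂ) * (z j : ℂ) * (n : ℂ) / (N : ℂ))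
              / ((|((h : ℤ) : ℝ)| : ℝ) ^ α : ℝ)) := by
  classical
  have hγ0 : ∀ j, 0 ≤ γ j := fun j => (hγ j).le
  have hN0 : (N : ℂ) ≠ 0 := Nat.cast_ne_zero.mpr (by omega)
  set ρC : Fin s → ℤ → ℂ := fun j h =>
    if h = 0 then (1 : ℂ) else (γ j : ℂ) * ((|(h : ℝ)| ^ (-α) : ℝ) : ℂ) with hρC
  set f : (Fin s → ℤ) → ℂ := fun h => ∏ j, ρC j (h j) with hf
  set k : (Fin s → ℤ) → ℤ := fun h => ∑ j, h j * z j with hk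
  -- real product summability
  have hnonneg : ∀ (j : Fin s) (h : ℤ),
      0 ≤ (if h = 0 then (1 : ℝ) else γ j * |(h : ℝ)| ^ (-α)) := by
    intro j h
    split_ifs
    · norm_num
    · exact mul_nonneg (hγ0 j) (Real.rpow_nonneg (abs_nonneg _) _)
  have hfsummR : Summable fun h : Fin s → ℤ =>
      ∏ j, (if h j = 0 then (1 : ℝ) else γ j * |(h j : ℝ)| ^ (-α)) :=
    summable_pi_prod s (fun j h => if h = 0 then (1 : ℝ) else γ j * |(h : ℝ)| ^ (-α))
      (fun j => summable_rho hα (γ j)) hnonneg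
  have hρnorm : ∀ (j : Fin s) (h : ℤ),
      ‖ρC j h‖ = (if h = 0 then (1 : ℝ) else γ j * |(h : ℝ)| ^ (-α)) := by
    intro j h
    simp only [hρC]
    split_ifs with hh
    · simp
    · rw [norm_mul, Complex.norm_real, Complex.norm_real, Real.norm_eq_abs, Real.norm_eq_abs,
        _root_.abs_of_nonneg (hγ0 j), abs_eq_self.mpr (Real.rpow_nonneg (abs_nonneg _) _)]
  have hfnorm : ∀ h, ‖f h‖ = ∏ j, (if h j = 0 then (1 : ℝ) else γ j * |(h j : ℝ)| ^ (-α)) := by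
    intro h
    rw [hf, norm_prod]
    exact Finset.prod_congr rfl fun j _ => hρnorm j (h j)
  have hfsumm : Summable f :=
    Summable.of_norm (hfsummR.congr fun h => (hfnorm h).symm)
  -- Step 1: each factor in the RHS product is a full tsum over ℤ
  have step1 : ∀ n : ℕ, (∏ j, (1 + (γ j : ℂ) * ∑' h : {h : ℤ // h ≠ 0},
        Complex.exp (2 * Real.pi * Complex.I * ((h : ℤ) : ℂ) * (z j : ℂ) * (n : ℂ) / (N : ℂ))
          / ((|((h : ℤ) : ℝ)| : ℝ) ^ α : ℝ)))
      = ∑' h : Fin s → ℤ,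
          f h * Complex.exp (2 * Real.pi * Complex.I * ((k h : ℤ) : ℂ) * (n : ℂ) / (N : ℂ)) := by
    intro n
    have e1 : ∀ j : Fin s, (1 + (γ j : ℂ) * ∑' h : {h : ℤ // h ≠ 0},
        Complex.exp (2 * Real.pi * Complex.I * ((h : ℤ) : ℂ) * (z j : ℂ) * (n : ℂ) / (N : ℂ))
          / ((|((h : ℤ) : ℝ)| : ℝ) ^ α : ℝ))
        = ∑' h : ℤ, (ρC j h *
            Complex.exp (2 * Real.pi * Complex.I * (h : ℂ) * (z j : ℂ) * (n : ℂ) / (N : ℂ))) :=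
      fun j => (one_dim hα (γ j) (hγ0 j) (z j) n N).symm
    rw [Finset.prod_congr rfl fun j _ => e1 j]
    rw [← tsum_pi_prod s (fun j h => ρC j h *
        Complex.exp (2 * Real.pi * Complex.I * (h : ℂ) * (z j : ℂ) * (n : ℂ) / (N : ℂ)))
      (fun j => (summable_rho hα (γ j)).congr
        fun h => (norm_summand (γ j) (hγ0 j) (z j) n N h).symm)]
    refine tsum_congr fun h => ?_
    rw [Finset.prod_mul_distrib, ← Complex.exp_sum]
    congr 1
    have : ∑ j, 2 * (Real.pi : ℂ) * Complex.I * ((h j : ℤ) : ℂ) * (z j : ℂ) * (n : ℂ) / (N : ℂ)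
        = 2 * (Real.pi : ℂ) * Complex.I * ((k h : ℤ) : ℂ) * (n : ℂ) / (N : ℂ) := by
      rw [hk]
      push_cast
      rw [Finset.mul_sum, Finset.sum_mul, Finset.sum_div]
      exact Finset.sum_congr rfl fun j _ => by ring
    rw [this]
  -- summability of the phase-weighted sums, for each n
  have hphase : ∀ n : ℕ, Summable fun h : Fin s → ℤ =>
      f h * Complex.exp (2 * Real.pi * Complex.I * ((k h : ℤ) : ℂ) * (n : ℂ) / (N : ℂ)) := by
    intro n
    apply Summable.of_norm
    refine hfsummR.congr fun h => ?_
    rw [norm_mul, norm_exp_eq_one', mul_one, hfnorm h]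
  -- the function with divisibility indicator
  set F : (Fin s → ℤ) → ℂ := fun h => if (N : ℤ) ∣ k h then f h else 0 with hF
  have hFsumm : Summable F := by
    refine (hfsumm.indicator {h | (N : ℤ) ∣ k h}).congr fun h => ?_
    rw [Set.indicator_apply]
    rfl
  -- RHS equals -1 + ∑' F
  have hRHS : (-1 + (1 / (N : ℂ)) * ∑ n ∈ Finset.range N, ∏ j,
      (1 + (γ j : ℂ) * ∑' h : {h : ℤ // h ≠ 0},
        Complex.exp (2 * Real.pi * Complex.I * ((h : ℤ) : ℂ) * (z j : ℂ) * (n : ℂ) / (N : ℂ))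
          / ((|((h : ℤ) : ℝ)| : ℝ) ^ α : ℝ)))
      = -1 + ∑' h : Fin s → ℤ, F h := by
    congr 1
    rw [Finset.sum_congr rfl fun n _ => step1 n]
    rw [← Summable.tsum_finsetSum fun n _ => hphase n]
    rw [← tsum_mul_left]
    refine tsum_congr fun h => ?_
    rw [← Finset.mul_sum, charSum N hN (k h)]
    simp only [hF]
    split_ifs with hd
    · field_simp
    · simp
  rw [hRHS]
  -- split off the h = 0 term of ∑' F
  have hF0 : F 0 = 1 := by
    simp only [hF, hk, hf, hρC]
    rw [if_pos (by simp)]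
    simp
  rw [Summable.tsum_eq_add_tsum_ite hFsumm 0, hF0]
  -- identify the LHS with the remaining sum
  rw [Complex.ofReal_tsum]
  have hcast : ∀ h : Fin s → ℤ,
      ((∏ j, (if h j = 0 then (1 : ℝ) else γ j * |(h j : ℝ)| ^ (-α)) : ℝ) : ℂ) = f h := by
    intro h
    rw [Complex.ofReal_prod, hf]
    refine Finset.prod_congr rfl fun j _ => ?_
    simp only [hρC]
    split_ifs with hj
    · simp
    · push_cast
      rfl
  have hGsupp : Function.support (fun h : Fin s → ℤ =>
      if (h ≠ 0 ∧ (N : ℤ) ∣ k h) then f h else 0)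
      ⊆ Set.range ((↑) : {h : Fin s → ℤ // h ≠ 0 ∧ (N : ℤ) ∣ ∑ j, h j * z j} → (Fin s → ℤ)) := by
    intro h hh
    rw [Function.mem_support] at hh
    by_cases hc : h ≠ 0 ∧ (N : ℤ) ∣ k h
    · exact ⟨⟨h, hc⟩, rfl⟩
    · exact absurd (if_neg hc) hh
  calc ∑' h : {h : Fin s → ℤ // h ≠ 0 ∧ (N : ℤ) ∣ ∑ j, h j * z j},
        ((∏ j, (if h.1 j = 0 then (1 : ℝ) else γ j * |(h.1 j : ℝ)| ^ (-α)) : ℝ) : ℂ)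
      = ∑' h : {h : Fin s → ℤ // h ≠ 0 ∧ (N : ℤ) ∣ ∑ j, h j * z j},
          (if ((h : Fin s → ℤ) ≠ 0 ∧ (N : ℤ) ∣ k (h : Fin s → ℤ)) then f (h : Fin s → ℤ) else 0) := by
        refine tsum_congr fun h => ?_
        rw [hcast h.1, if_pos h.2]
    _ = ∑' h : Fin s → ℤ, (if (h ≠ 0 ∧ (N : ℤ) ∣ k h) then f h else 0) :=
        Subtype.val_injective.tsum_eq hGsupp
    _ = -1 + (1 + ∑' h : Fin s → ℤ, if h = 0 then 0 else F h) := by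
        rw [neg_add_cancel_left]
        refine tsum_congr fun h => ?_
        simp only [hF]
        by_cases h0 : h = 0
        · simp [h0]
        · rw [if_neg h0]
          by_cases hd : (N : ℤ) ∣ k h
          · rw [if_pos ⟨h0, hd⟩, if_pos hd]
          · rw [if_neg (by tauto), if_neg hd]
end
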